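/- Let (Ω, μ) be a measure space, let Q : Ω → ℝ be μ-integrable with Q ≥ 0 μ-a.e. and ∫ Q dμ > 0, and let u : Ω → ℝ be measurable with m ≤ u ≤ M μ-a.e. for real constants m ≤ M. Let c_r, c_i, Θ, γ ∈ ℝ, and let G, f : Ω → ℝ be μ-integrable. Suppose ∫ (u − c_r)·Q dμ = 0, ∫ ((u − c_r)² − c_i²)·Q dμ = ∫ G dμ, G ≥ f + Θ·Q μ-a.e., and ∫ f dμ ≥ γ·∫ Q dμ. Then (c_r − (M+m)/2)² + c_i² ≤ ((M−m)/2)² − Θ − γ. -/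

import Mathlib

set_option autoImplicit false

open MeasureTheory

theorem semi_ellipse_skeleton
    {Ω : Type*} [MeasurableSpace Ω] (μ : Measure Ω)
    (Q u G f : Ω → ℝ) (m M c_r c_i Θ γ : ℝ)
    (hQint : Integrable Q μ)
    (hQnn : ∀ᵐ x ∂μ, 0 ≤ Q x)
    (hQpos : 0 < ∫ x, Q x ∂μ)
    (hu : Measurable u)
    (hmM : m ≤ M)
    (hbd : ∀ᵐ x ∂μ, m ≤ u x ∧ u x ≤ M)
    (hGint : Integrable G μ)
    (hfint : Integrable f μ)
    (himag : ∫ x, (u x - c_r) * Q x ∂μ = 0)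
    (hreal : ∫ x, ((u x - c_r) ^ 2 - c_i ^ 2) * Q x ∂μ = ∫ x, G x ∂μ)
    (hGf : ∀ᵐ x ∂μ, f x + Θ * Q x ≤ G x)
    (hf : γ * ∫ x, Q x ∂μ ≤ ∫ x, f x ∂μ) :
    (c_r - (M + m) / 2) ^ 2 + c_i ^ 2 ≤ ((M - m) / 2) ^ 2 - Θ - γ := by
  set v : Ω → ℝ := fun x => max m (min (u x) M) with hv
  have hvu : v =ᵐ[μ] u := by
    filter_upwards [hbd] with x ⟨h1, h2⟩
    simp [hv, min_eq_left h2, max_eq_right h1]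
  have hvm : Measurable v := measurable_const.max (hu.min measurable_const)
  have hvbd : ∀ x, m ≤ v x ∧ v x ≤ M := fun x =>
    ⟨le_max_left _ _, max_le hmM (min_le_right _ _)⟩
  have h1int : Integrable (fun x => (v x - c_r) * Q x) μ := by
    refine hQint.bdd_mul (c := |m - c_r| + |M - c_r|) ((hvm.sub measurable_const).aestronglyMeasurable) (Filter.Eventually.of_forall fun x => ?_)
    have := (hvbd x).1; have := (hvbd x).2
    rw [Real.norm_eq_abs]
    cases abs_cases (m - c_r) <;> cases abs_cases (M - c_r) <;> cases abs_cases (v x - c_r) <;> linarith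
  have h2int : Integrable (fun x => ((v x - c_r) ^ 2 - c_i ^ 2) * Q x) μ := by
    refine hQint.bdd_mul (c := (|m - c_r| + |M - c_r|) ^ 2 + |c_i ^ 2|) (((hvm.sub measurable_const).pow_const 2 |>.sub measurable_const).aestronglyMeasurable)
      (Filter.Eventually.of_forall fun x => ?_)
    have h1 := (hvbd x).1; have h2 := (hvbd x).2
    rw [Real.norm_eq_abs]
    have hb : |v x - c_r| ≤ |m - c_r| + |M - c_r| := by
      cases abs_cases (m - c_r) <;> cases abs_cases (M - c_r) <;> cases abs_cases (v x - c_r) <;> linarith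
    have hsq : (v x - c_r) ^ 2 ≤ (|m - c_r| + |M - c_r|) ^ 2 := by
      have := abs_nonneg (v x - c_r)
      nlinarith [sq_abs (v x - c_r)]
    cases abs_cases ((v x - c_r) ^ 2 - c_i ^ 2) <;> cases abs_cases (c_i ^ 2) <;> nlinarith [sq_nonneg (v x - c_r)]
  -- transported hypotheses
  have himag' : ∫ x, (v x - c_r) * Q x ∂μ = 0 := by
    rw [← himag]
    exact integral_congr_ae (by filter_upwards [hvu] with x hx; rw [hx])
  have hreal' : ∫ x, ((v x - c_r) ^ 2 - c_i ^ 2) * Q x ∂μ = ∫ x, G x ∂μ := by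
    rw [← hreal]
    exact integral_congr_ae (by filter_upwards [hvu] with x hx; rw [hx])
  set A := ∫ x, Q x ∂μ with hA
  have hGlb : (γ + Θ) * A ≤ ∫ x, G x ∂μ := by
    have h := integral_mono_ae (hfint.add (hQint.const_mul Θ)) hGint hGf
    simp only [Pi.add_apply] at h
    rw [integral_add hfint (hQint.const_mul Θ), integral_const_mul] at h
    linarith
  -- key nonnegativity
  have hkey : (0:ℝ) ≤ ∫ x, ((-(1:ℝ)) * (((v x - c_r) ^ 2 - c_i ^ 2) * Q x)
      + (-(c_i ^ 2) - (c_r - m) * (c_r - M)) * Q x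
      + (m + M - 2 * c_r) * ((v x - c_r) * Q x)) ∂μ := by
    refine integral_nonneg_of_ae ?_
    filter_upwards [hQnn] with x hQ
    have h1 := (hvbd x).1; have h2 := (hvbd x).2
    have : (-(1:ℝ)) * (((v x - c_r) ^ 2 - c_i ^ 2) * Q x)
      + (-(c_i ^ 2) - (c_r - m) * (c_r - M)) * Q x
      + (m + M - 2 * c_r) * ((v x - c_r) * Q x) = (v x - m) * (M - v x) * Q x := by ring
    rw [this]
    have : 0 ≤ (v x - m) * (M - v x) := mul_nonneg (by linarith) (by linarith)
    positivity
  have i1 : Integrable (fun x => (-(1:ℝ)) * (((v x - c_r) ^ 2 - c_i ^ 2) * Q x)) μ :=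
    h2int.const_mul _
  have i2 : Integrable (fun x => (-(c_i ^ 2) - (c_r - m) * (c_r - M)) * Q x) μ :=
    hQint.const_mul _
  have i3 : Integrable (fun x => (m + M - 2 * c_r) * ((v x - c_r) * Q x)) μ :=
    h1int.const_mul _
  have i12 : Integrable (fun x => (-(1:ℝ)) * (((v x - c_r) ^ 2 - c_i ^ 2) * Q x)
      + (-(c_i ^ 2) - (c_r - m) * (c_r - M)) * Q x) μ := i1.add i2
  rw [integral_add i12 i3, integral_add i1 i2,
      integral_const_mul, integral_const_mul, integral_const_mul, hreal', himag'] at hkey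
  have hfinal : c_i ^ 2 * A + (c_r - m) * (c_r - M) * A ≤ -((γ + Θ) * A) := by
    nlinarith
  have : c_i ^ 2 + (c_r - m) * (c_r - M) ≤ -(γ + Θ) := by
    by_contra h
    push_neg at h
    nlinarith
  nlinarith
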